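/- Suppose γ > β·N^q. Then S(t) → N as t → ∞. -/

import Mathlib

open Filter Topology

/-- Proposition 8.2 of the paper, case `p = 1`, `γ > β·N^q`: any solution of the
reduced scalar ODE `S' = −β·S^q·(N−S) + γ·(N−S)` with `S(t) ∈ (0,N)` converges to `N`
as `t → ∞` (the disease dies out). -/
theorem stmt15 (q β γ N : ℝ) (S : ℝ → ℝ)
    (hq : 0 < q) (hβ : 0 < β) (hγ : 0 < γ) (hN : 0 < N)
    (hScont : ContinuousOn S (Set.Ici 0))
    (hrange : ∀ t : ℝ, 0 ≤ t → S t ∈ Set.Ioo 0 N)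
    (hSode : ∀ t : ℝ, 0 < t →
      HasDerivAt S (-(β * S t ^ q * (N - S t)) + γ * (N - S t)) t)
    (h : β * N ^ q < γ) :
    Tendsto S atTop (𝓝 N) := by
  set c : ℝ := γ - β * N ^ q with hc
  have hcpos : 0 < c := by simp [hc]; linarith
  set f : ℝ → ℝ := fun t => (N - S t) * Real.exp (c * t) with hf
  -- f has nonpositive derivative on (0,∞)
  have hfderiv : ∀ t : ℝ, 0 < t → HasDerivAt f
      ((-(-(β * S t ^ q * (N - S t)) + γ * (N - S t))) * Real.exp (c * t)
        + (N - S t) * (Real.exp (c * t) * c)) t := by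
    intro t ht
    have h1 : HasDerivAt (fun t => N - S t)
        (-(-(β * S t ^ q * (N - S t)) + γ * (N - S t))) t := by
      simpa using (hSode t ht).const_sub N
    have h2 : HasDerivAt (fun t => Real.exp (c * t)) (Real.exp (c * t) * c) t := by
      have : HasDerivAt (fun t : ℝ => c * t) c t := by
        simpa using (hasDerivAt_id t).const_mul c
      exact this.exp
    exact h1.mul h2
  have hfderiv_nonpos : ∀ t ∈ interior (Set.Ici (0:ℝ)), deriv f t ≤ 0 := by
    intro t ht
    rw [interior_Ici] at ht
    have ht' : 0 < t := ht
    rw [(hfderiv t ht').deriv]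
    obtain ⟨hS0, hSN⟩ := hrange t ht'.le
    have hpow : S t ^ q ≤ N ^ q := Real.rpow_le_rpow hS0.le hSN.le hq.le
    have hexp : 0 < Real.exp (c * t) := Real.exp_pos _
    have key : -(-(β * S t ^ q * (N - S t)) + γ * (N - S t)) + (N - S t) * c ≤ 0 := by
      have hNS : 0 < N - S t := by linarith
      have : β * S t ^ q ≤ β * N ^ q := by nlinarith
      nlinarith
    nlinarith
  have hfcont : ContinuousOn f (Set.Ici 0) :=
    ((continuousOn_const.sub hScont).mul (Real.continuous_exp.comp
      (continuous_const.mul continuous_id)).continuousOn)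
  have hfanti : AntitoneOn f (Set.Ici 0) := by
    apply antitoneOn_of_deriv_nonpos (convex_Ici 0) hfcont _ hfderiv_nonpos
    intro t ht
    rw [interior_Ici] at ht
    exact (hfderiv t ht).differentiableAt.differentiableWithinAt
  -- upper bound : N - S t ≤ (N - S 0) * exp (-c*t)
  have hub : ∀ t : ℝ, 0 ≤ t → N - S t ≤ (N - S 0) * Real.exp (-(c * t)) := by
    intro t ht
    have := hfanti (Set.self_mem_Ici) ht ht
    have hexp : 0 < Real.exp (c * t) := Real.exp_pos _
    simp only [hf, mul_zero, Real.exp_zero, mul_one] at this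
    rw [Real.exp_neg, ← div_eq_mul_inv, le_div_iff₀ hexp]
    linarith
  have hlim : Tendsto (fun t => N - S t) atTop (𝓝 0) := by
    refine tendsto_of_tendsto_of_tendsto_of_le_of_le' (h := fun t => (N - S 0) * Real.exp (-(c * t))) tendsto_const_nhds ?_ ?_ ?_
    · have : Tendsto (fun t : ℝ => -(c * t)) atTop atBot := by
        apply tendsto_neg_atBot_iff.mpr
        exact Tendsto.const_mul_atTop hcpos tendsto_id
      simpa using (Real.tendsto_exp_atBot.comp this).const_mul (N - S 0)
    · filter_upwards [eventually_ge_atTop (0:ℝ)] with t ht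
      exact sub_nonneg.mpr (hrange t ht).2.le
    · filter_upwards [eventually_ge_atTop (0:ℝ)] with t ht
      exact hub t ht
  have : Tendsto (fun t => N - (N - S t)) atTop (𝓝 (N - 0)) :=
    tendsto_const_nhds.sub hlim
  simpa using this
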